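/- Let κ be an uncountable cardinal, P a set with |P| = κ, and K a cofinal Kurepa family in [P]^ω. For each A ∈ K let X_A = A^ω ⊆ P^ω, fix a well-ordering ≺ of K, and let Y_A = X_A \ ⋃{X_B : B ≺ A}. Then the nonempty sets Y_A form a partition of P^ω, and exactly |K| of the sets Y_A are nonempty. -/

import Mathlib

open Cardinal Set

/-- Given a set P of uncountable cardinality κ and a cofinal Kurepa family K in
[P]^ω, well-ordered by ≺, the nonempty sets Y_A = A^ω \ ⋃_{B ≺ A} B^ω form a
partition of P^ω, and exactly |K| of them are nonempty. -/
theorem stmt_8 {α : Type*} (hα : ℵ₀ < #α)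
    (K : Set (Set α))
    (hmem : ∀ A ∈ K, A.Countable ∧ A.Infinite)
    (hcof : ∀ X : Set α, X.Countable → X.Infinite → ∃ A ∈ K, X ⊆ A)
    (hKurepa : ∀ X : Set α, X.Countable → {Z : Set α | ∃ A ∈ K, Z = X ∩ A}.Countable)
    (r : K → K → Prop) [IsWellOrder K r]
    (Y : K → Set (ℕ → α))
    (hY : ∀ A : K, Y A = {x : ℕ → α | ∀ n, x n ∈ (A : Set α)} \
      ⋃ (B : K) (_ : r B A), {x : ℕ → α | ∀ n, x n ∈ (B : Set α)}) :
    (∀ A B : K, A ≠ B → Disjoint (Y A) (Y B)) ∧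
    (⋃ A : K, Y A) = Set.univ ∧
    #{A : K // (Y A).Nonempty} = #K := by
  have hwf : WellFounded r := IsWellFounded.wf
  have hinf : Infinite α := Cardinal.infinite_iff.2 hα.le
  set S : Set α := Set.range (Infinite.natEmbedding α) with hS
  have hScnt : S.Countable := Set.countable_range _
  have hSinf : S.Infinite := Set.infinite_range_of_injective (Infinite.natEmbedding α).injective
  -- disjointness
  have disj : ∀ A B : K, A ≠ B → Disjoint (Y A) (Y B) := by
    intro A B hne
    have key : ∀ C D : K, r C D → Disjoint (Y C) (Y D) := by
      intro C D hr
      rw [Set.disjoint_left]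
      intro x hxC hxD
      rw [hY C] at hxC
      rw [hY D] at hxD
      exact hxD.2 (Set.mem_iUnion₂.2 ⟨C, hr, hxC.1⟩)
    rcases trichotomous_of r A B with h | h | h
    · exact key A B h
    · exact absurd h hne
    · exact (key B A h).symm
  refine ⟨disj, ?_, ?_⟩
  · -- union is everything
    ext x
    simp only [Set.mem_iUnion, Set.mem_univ, iff_true]
    have hx : ∃ A : K, ∀ n, x n ∈ (A : Set α) := by
      obtain ⟨A, hAK, hsub⟩ := hcof (Set.range x ∪ S)
        ((Set.countable_range x).union hScnt)
        (Set.Infinite.mono Set.subset_union_right hSinf)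
      exact ⟨⟨A, hAK⟩, fun n => hsub (Or.inl ⟨n, rfl⟩)⟩
    obtain ⟨A₀, hA₀, hmin⟩ := hwf.has_min {A : K | ∀ n, x n ∈ (A : Set α)} hx
    refine ⟨A₀, ?_⟩
    rw [hY A₀]
    refine ⟨hA₀, ?_⟩
    intro hmem'
    obtain ⟨B, hB⟩ := Set.mem_iUnion.1 hmem'
    obtain ⟨hrB, hxB⟩ := Set.mem_iUnion.1 hB
    exact hmin B hxB hrB
  · -- cardinality
    -- #K is uncountable
    have hcover : (Set.univ : Set α) ⊆ ⋃ A : K, (A : Set α) := by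
      intro a _
      obtain ⟨A, hAK, hsub⟩ := hcof ({a} ∪ S) ((Set.countable_singleton a).union hScnt)
        (Set.Infinite.mono Set.subset_union_right hSinf)
      exact Set.mem_iUnion.2 ⟨⟨A, hAK⟩, hsub (Or.inl rfl)⟩
    have hKbig : ℵ₀ < #K := by
      by_contra hle
      push_neg at hle
      have h1 : #α ≤ #(⋃ A : K, (A : Set α)) := by
        rw [← Cardinal.mk_univ (α := α)]
        exact Cardinal.mk_le_mk_of_subset hcover
      have h2 : #(⋃ A : K, (A : Set α)) ≤ #K * ⨆ A : K, #(A : Set α) :=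
        Cardinal.mk_iUnion_le _
      have h3 : (⨆ A : K, #(A : Set α)) ≤ ℵ₀ := by
        apply ciSup_le'
        intro A
        exact (hmem A A.2).1.le_aleph0
      have : #α ≤ ℵ₀ := by
        calc #α ≤ #K * ⨆ A : K, #(A : Set α) := h1.trans h2
        _ ≤ ℵ₀ * ℵ₀ := mul_le_mul' hle h3
        _ = ℵ₀ := Cardinal.aleph0_mul_aleph0
      exact absurd this (not_le.2 hα)
    -- the map f from K to nonempty-Y indices
    have hne : ∀ A : K, {B : K | (A : Set α) ⊆ (B : Set α)}.Nonempty := fun A => ⟨A, show (A : Set α) ⊆ (A : Set α) from Set.Subset.rfl⟩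
    set f : K → {A : K // (Y A).Nonempty} := fun A =>
      ⟨hwf.min {B : K | (A : Set α) ⊆ (B : Set α)} (hne A), by
        set B := hwf.min {B : K | (A : Set α) ⊆ (B : Set α)} (hne A) with hBdef
        have hAB : (A : Set α) ⊆ (B : Set α) := hwf.min_mem _ (hne A)
        obtain ⟨en, hen⟩ := (hmem A A.2).1.exists_eq_range ((hmem A A.2).2.nonempty)
        refine ⟨en, ?_⟩
        rw [hY B]
        constructor
        · intro n
          exact hAB (hen ▸ Set.mem_range_self n)
        · intro hmem'
          obtain ⟨C, hC⟩ := Set.mem_iUnion.1 hmem'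
          obtain ⟨hrC, hxC⟩ := Set.mem_iUnion.1 hC
          have hAC : (A : Set α) ⊆ (C : Set α) := by
            rw [hen]
            rintro _ ⟨n, rfl⟩
            exact hxC n
          exact hwf.not_lt_min _ hAC hrC⟩ with hf
    have hfib : ∀ b : {A : K // (Y A).Nonempty}, #(f ⁻¹' {b}) ≤ ℵ₀ := by
      intro b
      have hbc : (b.1 : Set α).Countable := (hmem b.1 b.1.2).1
      have hKur := hKurepa (b.1 : Set α) hbc
      -- inject the fiber into the traces
      have : Function.Injective (fun A : f ⁻¹' {b} =>
          (⟨(b.1 : Set α) ∩ (A.1 : Set α), ⟨A.1, A.1.2, rfl⟩⟩ :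
            {Z : Set α | ∃ A ∈ K, Z = (b.1 : Set α) ∩ A})) := by
        intro A A' h
        have hsub : (A.1 : Set α) ⊆ (b.1 : Set α) := by
          have hm : (A.1 : Set α) ⊆ (((f A.1).1 : K) : Set α) :=
            hwf.min_mem {B : K | (A.1 : Set α) ⊆ (B : Set α)} (hne A.1)
          have hfa : f A.1 = b := A.2
          have heq : (((f A.1).1 : K) : Set α) = (b.1 : Set α) :=
            congrArg (fun x : {A : K // (Y A).Nonempty} => ((x.1 : K) : Set α)) hfa
          exact heq ▸ hm
        have hsub' : (A'.1 : Set α) ⊆ (b.1 : Set α) := by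
          have hm : (A'.1 : Set α) ⊆ (((f A'.1).1 : K) : Set α) :=
            hwf.min_mem {B : K | (A'.1 : Set α) ⊆ (B : Set α)} (hne A'.1)
          have hfa : f A'.1 = b := A'.2
          have heq : (((f A'.1).1 : K) : Set α) = (b.1 : Set α) :=
            congrArg (fun x : {A : K // (Y A).Nonempty} => ((x.1 : K) : Set α)) hfa
          exact heq ▸ hm
        have h1 : (b.1 : Set α) ∩ (A.1 : Set α) = (b.1 : Set α) ∩ (A'.1 : Set α) :=
          congrArg Subtype.val h
        have h2 : (A.1 : Set α) = (A'.1 : Set α) := by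
          rw [Set.inter_eq_self_of_subset_right hsub, Set.inter_eq_self_of_subset_right hsub'] at h1
          exact h1
        exact Subtype.ext (Subtype.ext h2)
      calc #(f ⁻¹' {b}) ≤ #{Z : Set α | ∃ A ∈ K, Z = (b.1 : Set α) ∩ A} :=
            Cardinal.mk_le_of_injective this
        _ ≤ ℵ₀ := hKur.le_aleph0
    have hKle : #K ≤ #{A : K // (Y A).Nonempty} * ℵ₀ :=
      Cardinal.mk_le_mk_mul_of_mk_preimage_le f hfib
    have hNbig : ℵ₀ ≤ #{A : K // (Y A).Nonempty} := by
      by_contra hlt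
      push_neg at hlt
      have : #K ≤ ℵ₀ := hKle.trans (by
        calc #{A : K // (Y A).Nonempty} * ℵ₀ ≤ ℵ₀ * ℵ₀ := mul_le_mul' hlt.le le_rfl
        _ = ℵ₀ := Cardinal.aleph0_mul_aleph0)
      exact absurd this (not_le.2 hKbig)
    refine le_antisymm (Cardinal.mk_subtype_le _) ?_
    rw [Cardinal.mul_aleph0_eq hNbig] at hKle
    exact hKle
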